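/- arXiv:1204.3549 — 3 statements merged into one kernel-verified Lean document; each statement's English description precedes it below -/
import Mathlib

section
/- The Petersen graph has chromatic index 4; in particular it is not 3-edge-colorable. -/
def petersenGraph : SimpleGraph {s : Finset (Fin 5) // s.card = 2} where
  Adj x y := Disjoint x.1 y.1
  symm := ⟨fun _ _ h => h.symm⟩
  loopless := ⟨fun x h => by
    have h2 := x.2
    rw [(Finset.disjoint_self_iff_empty _).mp h] at h2
    simp at h2⟩

instance : DecidableRel petersenGraph.Adj :=
  fun x y => inferInstanceAs (Decidable (Disjoint x.1 y.1))

instance : DecidableRel petersenGraph.lineGraph.Adj := fun e f =>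
  decidable_of_iff _ (SimpleGraph.lineGraph_adj_iff_exists).symm

def pe (a b c d : Fin 5)
    (h1 : ({a,b} : Finset (Fin 5)).card = 2 := by decide)
    (h2 : ({c,d} : Finset (Fin 5)).card = 2 := by decide)
    (h : s((⟨{a,b},h1⟩ : {s : Finset (Fin 5) // s.card = 2}), (⟨{c,d},h2⟩ : {s : Finset (Fin 5) // s.card = 2})) ∈ petersenGraph.edgeSet := by decide) :
    petersenGraph.edgeSet := ⟨_, h⟩

def edgeList : List petersenGraph.edgeSet :=
  [pe 0 1 2 3, pe 0 1 2 4, pe 0 1 3 4, pe 0 2 1 3, pe 0 2 1 4,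
   pe 0 2 3 4, pe 0 3 1 2, pe 0 3 1 4, pe 0 3 2 4, pe 0 4 1 2,
   pe 0 4 1 3, pe 0 4 2 3, pe 1 2 3 4, pe 1 3 2 4, pe 1 4 2 3]

def petEdge (i : ℕ) : petersenGraph.edgeSet := edgeList.getD i (pe 0 1 2 3)

def colList : List (Fin 4) := [0, 1, 2, 0, 1, 3, 0, 2, 3, 2, 3, 1, 1, 2, 3]

def colorOf (e : petersenGraph.edgeSet) : Fin 4 := colList.getD (edgeList.idxOf e) 0

theorem color4_valid : ∀ e f : petersenGraph.edgeSet,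
    petersenGraph.lineGraph.Adj e f → colorOf e ≠ colorOf f := by decide

def prevAdj : List (List ℕ) :=
  [[], [0], [0,1], [], [3], [2,3,4], [], [4,6], [1,6,7], [6], [3,9], [0,9,10],
   [2,5,6,9], [1,3,8,10], [0,4,7,11]]

theorem prevAdj_lt : ∀ i < 15, ∀ j ∈ prevAdj.getD i [], j < i := by decide

theorem prevAdj_adj : ∀ i < 15, ∀ j ∈ prevAdj.getD i [],
    petersenGraph.lineGraph.Adj (petEdge j) (petEdge i) := by decide

def go : List (List ℕ) → List ℕ → Bool
  | [], _ => true
  | prev :: rest, cs =>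
      (List.range 3).any fun c =>
        (prev.all fun j => cs.getD j 3 != c) && go rest (cs ++ [c])

theorem go_false : go prevAdj [] = false := by decide


lemma getD_map_range (f : ℕ → ℕ) {j k : ℕ} (h : j < k) :
    ((List.range k).map f).getD j 3 = f j := by
  rw [List.getD_eq_getElem _ _ (by simpa using h)]
  simp

theorem go_complete (f : ℕ → ℕ) (hf3 : ∀ i, f i < 3) :
    ∀ (L : List (List ℕ)) (k : ℕ),
      (∀ i prev, L[i]? = some prev → ∀ j ∈ prev, j < k + i ∧ f j ≠ f (k + i)) →
      go L ((List.range k).map f) = true := by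
  intro L
  induction L with
  | nil => intro k _; rfl
  | cons prev rest ih =>
    intro k h
    rw [go, List.any_eq_true]
    refine ⟨f k, List.mem_range.mpr (hf3 k), ?_⟩
    rw [Bool.and_eq_true]
    constructor
    · rw [List.all_eq_true]
      intro j hj
      have h0 := h 0 prev (by simp) j hj
      rw [Nat.add_zero] at h0
      rw [getD_map_range f h0.1]
      simpa using h0.2
    · have he : (List.range k).map f ++ [f k] = (List.range (k+1)).map f := by
        rw [List.range_succ, List.map_append]; rfl
      rw [he]
      apply ih (k+1)
      intro i p hp j hj
      have := h (i+1) p (by simpa using hp) j hj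
      have harith : k + 1 + i = k + (i + 1) := by omega
      rw [harith]
      exact this

theorem petersen_not3 : ¬ petersenGraph.lineGraph.Colorable 3 := by
  rintro ⟨C⟩
  set f : ℕ → ℕ := fun i => (C (petEdge i)).val with hf
  have hf3 : ∀ i, f i < 3 := fun i => (C (petEdge i)).isLt
  have hcon : ∀ i prev, prevAdj[i]? = some prev → ∀ j ∈ prev, j < 0 + i ∧ f j ≠ f (0 + i) := by
    intro i prev hp j hj
    obtain ⟨hi, he⟩ := List.getElem?_eq_some_iff.mp hp
    have hi15 : i < 15 := hi
    have hprev : prev = prevAdj.getD i [] := by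
      rw [List.getD_eq_getElem _ _ hi, he]
    subst hprev
    refine ⟨by simpa using prevAdj_lt i hi15 j hj, ?_⟩
    have hadj := prevAdj_adj i hi15 j hj
    have := C.valid hadj
    simp only [Nat.zero_add]
    exact fun hv => this (Fin.val_injective hv)
  have := go_complete f hf3 prevAdj 0 (by simpa using hcon)
  simp only [List.range_zero, List.map_nil] at this
  rw [go_false] at this
  exact Bool.false_ne_true this

theorem petersen_chromatic_index :
    petersenGraph.lineGraph.chromaticNumber = 4 ∧
    ¬ petersenGraph.lineGraph.Colorable 3 := by
  have h4 : petersenGraph.lineGraph.Colorable 4 :=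
    ⟨SimpleGraph.Coloring.mk colorOf (fun {e f} h => color4_valid e f h)⟩
  refine ⟨le_antisymm ?_ ?_, petersen_not3⟩
  · have := h4.chromaticNumber_le
    exact_mod_cast this
  · by_contra h
    push_neg at h
    rcases eq_or_ne petersenGraph.lineGraph.chromaticNumber ⊤ with ht | ht
    · rw [ht] at h; exact (not_top_lt h).elim
    · obtain ⟨n, hn⟩ := WithTop.ne_top_iff_exists.mp ht
      have hc : petersenGraph.lineGraph.Colorable n := by
        rw [← SimpleGraph.chromaticNumber_le_iff_colorable]
        exact le_of_eq hn.symm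
      have hn4 : n < 4 := by
        rw [← hn, show (4:ℕ∞) = ((4:ℕ):ℕ∞) by norm_num] at h
        exact ENat.coe_lt_coe.mp h
      exact petersen_not3 (hc.mono (by omega))
end

section
/- Any 3-regular simple graph of girth at least 5 on exactly 10 vertices is isomorphic to the Petersen graph. -/
open SimpleGraph

section Helpers

variable {V : Type*}

lemma cycle_len5 {G : SimpleGraph V} (hg : 5 ≤ G.girth) {a : V} {w : G.Walk a a}
    (hw : w.IsCycle) : 5 ≤ w.length := by
  have h1 : G.egirth ≤ (w.length : ℕ∞) :=
    iInf_le_of_le a (iInf_le_of_le w (iInf_le _ hw))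
  have hne : G.egirth ≠ ⊤ := by
    intro h; rw [h] at h1
    exact (ENat.coe_ne_top w.length) (top_le_iff.mp h1)
  have h2 : (5 : ℕ∞) ≤ G.egirth := by
    rw [← ENat.coe_toNat hne]; exact_mod_cast hg
  exact_mod_cast le_trans h2 h1

lemma no_tri {G : SimpleGraph V} (hg : 5 ≤ G.girth) {a b c : V}
    (hab : G.Adj a b) (hbc : G.Adj b c) (hca : G.Adj c a) : False := by
  have h1 := hab.ne; have h2 := hbc.ne; have h3 := hca.ne
  have hc : (Walk.cons hab (Walk.cons hbc (Walk.cons hca Walk.nil))).IsCycle := by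
    simp_all [Walk.isCycle_def, Walk.isTrail_def, Sym2.eq, Sym2.rel_iff']
    try aesop
  have := cycle_len5 hg hc
  simp at this

lemma no_c4 {G : SimpleGraph V} (hg : 5 ≤ G.girth) {a b c d : V}
    (hab : G.Adj a b) (hbc : G.Adj b c) (hcd : G.Adj c d) (hda : G.Adj d a)
    (hac : a ≠ c) (hbd : b ≠ d) : False := by
  have h1 := hab.ne; have h2 := hbc.ne; have h3 := hcd.ne; have h4 := hda.ne
  have hc : (Walk.cons hab (Walk.cons hbc (Walk.cons hcd (Walk.cons hda Walk.nil)))).IsCycle := by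
    simp_all [Walk.isCycle_def, Walk.isTrail_def, Sym2.eq, Sym2.rel_iff']
    try aesop
  have := cycle_len5 hg hc
  simp at this

lemma select_pair {α : Type*} [DecidableEq α] {x y : α} {P : α → Prop}
    (h : P x ∨ P y) : ∃ p q, P p ∧ ({p, q} : Finset α) = {x, y} := by
  rcases h with h | h
  · exact ⟨x, y, h, rfl⟩
  · exact ⟨y, x, h, Finset.pair_comm y x⟩

variable [Fintype V] [DecidableEq V]

lemma child_adj {G : SimpleGraph V} [DecidableRel G.Adj] (hg : 5 ≤ G.girth)
    {x p q1 q2 r r1 r2 : V}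
    (hcard : (G.neighborFinset x).card = 3)
    (hsub : G.neighborFinset x ⊆ {p, q1, q2, r1, r2})
    (hrr1 : G.Adj r r1) (hrr2 : G.Adj r r2) (hxr : x ≠ r) (hr12 : r1 ≠ r2) :
    G.Adj x q1 ∨ G.Adj x q2 := by
  by_contra h
  push_neg at h
  obtain ⟨h1, h2⟩ := h
  have hsub2 : G.neighborFinset x ⊆ {p, r1, r2} := by
    intro y hy
    have hmem := hsub hy
    have hadj : G.Adj x y := (G.mem_neighborFinset x y).mp hy
    simp only [Finset.mem_insert, Finset.mem_singleton] at hmem ⊢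
    rcases hmem with rfl|rfl|rfl|rfl|rfl <;> tauto
  have hle : ({p, r1, r2} : Finset V).card ≤ 3 := by
    apply le_trans (Finset.card_insert_le _ _)
    have := Finset.card_insert_le r1 ({r2} : Finset V)
    simp at this ⊢
    omega
  have heq : G.neighborFinset x = {p, r1, r2} :=
    Finset.eq_of_subset_of_card_le hsub2 (by omega)
  have hx1 : G.Adj x r1 := (G.mem_neighborFinset x r1).mp (by rw [heq]; simp)
  have hx2 : G.Adj x r2 := (G.mem_neighborFinset x r2).mp (by rw [heq]; simp)
  exact no_c4 hg hx1 hrr1.symm hrr2 hx2.symm hxr hr12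

lemma children_of {G : SimpleGraph V} [DecidableRel G.Adj]
    (hdeg : ∀ z : V, (G.neighborFinset z).card = 3)
    {v a : V} (h : G.Adj v a) :
    ∃ x y, x ≠ y ∧ G.neighborFinset a = {v, x, y} ∧ G.Adj a x ∧ G.Adj a y ∧ x ≠ v ∧ y ≠ v := by
  have hm : v ∈ G.neighborFinset a := (G.mem_neighborFinset a v).mpr h.symm
  have hc : ((G.neighborFinset a).erase v).card = 2 := by
    rw [Finset.card_erase_of_mem hm, hdeg a]
  obtain ⟨x, y, hxy, hE⟩ := Finset.card_eq_two.mp hc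
  have hx : x ∈ (G.neighborFinset a).erase v := by rw [hE]; simp
  have hy : y ∈ (G.neighborFinset a).erase v := by rw [hE]; simp
  refine ⟨x, y, hxy, ?_, (G.mem_neighborFinset a x).mp (Finset.mem_of_mem_erase hx),
    (G.mem_neighborFinset a y).mp (Finset.mem_of_mem_erase hy),
    Finset.ne_of_mem_erase hx, Finset.ne_of_mem_erase hy⟩
  rw [← Finset.insert_erase hm, hE]

end Helpers

def mk2 (i j : Fin 5) (h : ({i,j} : Finset (Fin 5)).card = 2 := by decide) :
    {s : Finset (Fin 5) // s.card = 2} := ⟨{i,j}, h⟩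

def petMap {V : Type*} (v a b c a1 a2 b1 b2 c1 c2 : V)
    (k : {s : Finset (Fin 5) // s.card = 2}) : V :=
  if k = mk2 0 1 then v else if k = mk2 2 3 then a else if k = mk2 2 4 then b
  else if k = mk2 3 4 then c else if k = mk2 0 4 then a1 else if k = mk2 1 4 then a2
  else if k = mk2 1 3 then b1 else if k = mk2 0 3 then b2 else if k = mk2 1 2 then c1 else c2

section PetMapEval

variable {V : Type*} (v a b c a1 a2 b1 b2 c1 c2 : V)

lemma petMap_k0 : petMap v a b c a1 a2 b1 b2 c1 c2 (mk2 0 1) = v := by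
  rw [petMap, if_pos rfl]
lemma petMap_k1 : petMap v a b c a1 a2 b1 b2 c1 c2 (mk2 2 3) = a := by
  rw [petMap, if_neg (by decide), if_pos rfl]
lemma petMap_k2 : petMap v a b c a1 a2 b1 b2 c1 c2 (mk2 2 4) = b := by
  rw [petMap, if_neg (by decide), if_neg (by decide), if_pos rfl]
lemma petMap_k3 : petMap v a b c a1 a2 b1 b2 c1 c2 (mk2 3 4) = c := by
  rw [petMap, if_neg (by decide), if_neg (by decide), if_neg (by decide), if_pos rfl]
lemma petMap_k4 : petMap v a b c a1 a2 b1 b2 c1 c2 (mk2 0 4) = a1 := by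
  rw [petMap, if_neg (by decide), if_neg (by decide), if_neg (by decide), if_neg (by decide),
    if_pos rfl]
lemma petMap_k5 : petMap v a b c a1 a2 b1 b2 c1 c2 (mk2 1 4) = a2 := by
  rw [petMap, if_neg (by decide), if_neg (by decide), if_neg (by decide), if_neg (by decide),
    if_neg (by decide), if_pos rfl]
lemma petMap_k6 : petMap v a b c a1 a2 b1 b2 c1 c2 (mk2 1 3) = b1 := by
  rw [petMap, if_neg (by decide), if_neg (by decide), if_neg (by decide), if_neg (by decide),
    if_neg (by decide), if_neg (by decide), if_pos rfl]
lemma petMap_k7 : petMap v a b c a1 a2 b1 b2 c1 c2 (mk2 0 3) = b2 := by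
  rw [petMap, if_neg (by decide), if_neg (by decide), if_neg (by decide), if_neg (by decide),
    if_neg (by decide), if_neg (by decide), if_neg (by decide), if_pos rfl]
lemma petMap_k8 : petMap v a b c a1 a2 b1 b2 c1 c2 (mk2 1 2) = c1 := by
  rw [petMap, if_neg (by decide), if_neg (by decide), if_neg (by decide), if_neg (by decide),
    if_neg (by decide), if_neg (by decide), if_neg (by decide), if_neg (by decide), if_pos rfl]
lemma petMap_k9 : petMap v a b c a1 a2 b1 b2 c1 c2 (mk2 0 2) = c2 := by
  rw [petMap, if_neg (by decide), if_neg (by decide), if_neg (by decide), if_neg (by decide),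
    if_neg (by decide), if_neg (by decide), if_neg (by decide), if_neg (by decide),
    if_neg (by decide)]

end PetMapEval

lemma mem10 : ∀ k : {s : Finset (Fin 5) // s.card = 2},
    k = mk2 0 1 ∨ k = mk2 2 3 ∨ k = mk2 2 4 ∨ k = mk2 3 4 ∨ k = mk2 0 4 ∨
    k = mk2 1 4 ∨ k = mk2 1 3 ∨ k = mk2 0 3 ∨ k = mk2 1 2 ∨ k = mk2 0 2 := by decide

lemma cardK52 : Fintype.card {s : Finset (Fin 5) // s.card = 2} = 10 := by decide

theorem petersen_unique_cage {V : Type*} [Fintype V] [DecidableEq V]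
    (G : SimpleGraph V) [DecidableRel G.Adj]
    (hreg : G.IsRegularOfDegree 3) (hgirth : 5 ≤ G.girth)
    (hcard : Fintype.card V = 10) :
    Nonempty (G ≃g petersenGraph) := by
  classical
  have hdeg : ∀ z : V, (G.neighborFinset z).card = 3 := fun z => hreg z
  have hne : Nonempty V := Fintype.card_pos_iff.mp (by rw [hcard]; norm_num)
  obtain ⟨v⟩ := hne
  obtain ⟨a, b, c, neab, neac, nebc, hNv⟩ := Finset.card_eq_three.mp (hdeg v)
  have hva : G.Adj v a := (G.mem_neighborFinset v a).mp (by rw [hNv]; simp)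
  have hvb : G.Adj v b := (G.mem_neighborFinset v b).mp (by rw [hNv]; simp)
  have hvc : G.Adj v c := (G.mem_neighborFinset v c).mp (by rw [hNv]; simp)
  have nadj_ab : ¬G.Adj a b := fun h => no_tri hgirth hva h hvb.symm
  have nadj_ac : ¬G.Adj a c := fun h => no_tri hgirth hva h hvc.symm
  have nadj_bc : ¬G.Adj b c := fun h => no_tri hgirth hvb h hvc.symm
  obtain ⟨a1, a2, nea1a2, hNa, haa1, haa2, nea1v, nea2v⟩ := children_of hdeg hva
  obtain ⟨rb1, rb2, nerb1rb2, hNbr, hbrb1, hbrb2, nerb1v, nerb2v⟩ := children_of hdeg hvb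
  obtain ⟨rc1, rc2, nerc1rc2, hNcr, hcrc1, hcrc2, nerc1v, nerc2v⟩ := children_of hdeg hvc

  -- raw ne facts
  have ne_v_a : v ≠ a := hva.ne
  have ne_v_b : v ≠ b := hvb.ne
  have ne_v_c : v ≠ c := hvc.ne
  have ne_v_a1 : v ≠ a1 := nea1v.symm
  have ne_v_a2 : v ≠ a2 := nea2v.symm
  have ne_v_rb1 : v ≠ rb1 := nerb1v.symm
  have ne_v_rb2 : v ≠ rb2 := nerb2v.symm
  have ne_v_rc1 : v ≠ rc1 := nerc1v.symm
  have ne_v_rc2 : v ≠ rc2 := nerc2v.symm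
  have ne_a_b : a ≠ b := neab
  have ne_a_c : a ≠ c := neac
  have ne_a_a1 : a ≠ a1 := haa1.ne
  have ne_a_a2 : a ≠ a2 := haa2.ne
  have ne_a_rb1 : a ≠ rb1 := by intro h; rw [← h] at hbrb1; exact nadj_ab hbrb1.symm
  have ne_a_rb2 : a ≠ rb2 := by intro h; rw [← h] at hbrb2; exact nadj_ab hbrb2.symm
  have ne_a_rc1 : a ≠ rc1 := by intro h; rw [← h] at hcrc1; exact nadj_ac hcrc1.symm
  have ne_a_rc2 : a ≠ rc2 := by intro h; rw [← h] at hcrc2; exact nadj_ac hcrc2.symm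
  have ne_b_c : b ≠ c := nebc
  have ne_b_a1 : b ≠ a1 := by intro h; rw [← h] at haa1; exact nadj_ab haa1
  have ne_b_a2 : b ≠ a2 := by intro h; rw [← h] at haa2; exact nadj_ab haa2
  have ne_b_rb1 : b ≠ rb1 := hbrb1.ne
  have ne_b_rb2 : b ≠ rb2 := hbrb2.ne
  have ne_b_rc1 : b ≠ rc1 := by intro h; rw [← h] at hcrc1; exact nadj_bc hcrc1.symm
  have ne_b_rc2 : b ≠ rc2 := by intro h; rw [← h] at hcrc2; exact nadj_bc hcrc2.symm
  have ne_c_a1 : c ≠ a1 := by intro h; rw [← h] at haa1; exact nadj_ac haa1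
  have ne_c_a2 : c ≠ a2 := by intro h; rw [← h] at haa2; exact nadj_ac haa2
  have ne_c_rb1 : c ≠ rb1 := by intro h; rw [← h] at hbrb1; exact nadj_bc hbrb1
  have ne_c_rb2 : c ≠ rb2 := by intro h; rw [← h] at hbrb2; exact nadj_bc hbrb2
  have ne_c_rc1 : c ≠ rc1 := hcrc1.ne
  have ne_c_rc2 : c ≠ rc2 := hcrc2.ne
  have ne_a1_a2 : a1 ≠ a2 := nea1a2
  have ne_a1_rb1 : a1 ≠ rb1 := by intro h; rw [← h] at hbrb1; exact no_c4 hgirth hva haa1 hbrb1.symm hvb.symm (Ne.symm nea1v) neab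
  have ne_a1_rb2 : a1 ≠ rb2 := by intro h; rw [← h] at hbrb2; exact no_c4 hgirth hva haa1 hbrb2.symm hvb.symm (Ne.symm nea1v) neab
  have ne_a1_rc1 : a1 ≠ rc1 := by intro h; rw [← h] at hcrc1; exact no_c4 hgirth hva haa1 hcrc1.symm hvc.symm (Ne.symm nea1v) neac
  have ne_a1_rc2 : a1 ≠ rc2 := by intro h; rw [← h] at hcrc2; exact no_c4 hgirth hva haa1 hcrc2.symm hvc.symm (Ne.symm nea1v) neac
  have ne_a2_rb1 : a2 ≠ rb1 := by intro h; rw [← h] at hbrb1; exact no_c4 hgirth hva haa2 hbrb1.symm hvb.symm (Ne.symm nea2v) neab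
  have ne_a2_rb2 : a2 ≠ rb2 := by intro h; rw [← h] at hbrb2; exact no_c4 hgirth hva haa2 hbrb2.symm hvb.symm (Ne.symm nea2v) neab
  have ne_a2_rc1 : a2 ≠ rc1 := by intro h; rw [← h] at hcrc1; exact no_c4 hgirth hva haa2 hcrc1.symm hvc.symm (Ne.symm nea2v) neac
  have ne_a2_rc2 : a2 ≠ rc2 := by intro h; rw [← h] at hcrc2; exact no_c4 hgirth hva haa2 hcrc2.symm hvc.symm (Ne.symm nea2v) neac
  have ne_rb1_rb2 : rb1 ≠ rb2 := nerb1rb2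
  have ne_rb1_rc1 : rb1 ≠ rc1 := by intro h; rw [← h] at hcrc1; exact no_c4 hgirth hvb hbrb1 hcrc1.symm hvc.symm (Ne.symm nerb1v) nebc
  have ne_rb1_rc2 : rb1 ≠ rc2 := by intro h; rw [← h] at hcrc2; exact no_c4 hgirth hvb hbrb1 hcrc2.symm hvc.symm (Ne.symm nerb1v) nebc
  have ne_rb2_rc1 : rb2 ≠ rc1 := by intro h; rw [← h] at hcrc1; exact no_c4 hgirth hvb hbrb2 hcrc1.symm hvc.symm (Ne.symm nerb2v) nebc
  have ne_rb2_rc2 : rb2 ≠ rc2 := by intro h; rw [← h] at hcrc2; exact no_c4 hgirth hvb hbrb2 hcrc2.symm hvc.symm (Ne.symm nerb2v) nebc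
  have ne_rc1_rc2 : rc1 ≠ rc2 := nerc1rc2
  have ne_a_v : a ≠ v := (ne_v_a).symm
  have ne_b_v : b ≠ v := (ne_v_b).symm
  have ne_c_v : c ≠ v := (ne_v_c).symm
  have ne_a1_v : a1 ≠ v := (ne_v_a1).symm
  have ne_a2_v : a2 ≠ v := (ne_v_a2).symm
  have ne_rb1_v : rb1 ≠ v := (ne_v_rb1).symm
  have ne_rb2_v : rb2 ≠ v := (ne_v_rb2).symm
  have ne_rc1_v : rc1 ≠ v := (ne_v_rc1).symm
  have ne_rc2_v : rc2 ≠ v := (ne_v_rc2).symm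
  have ne_b_a : b ≠ a := (ne_a_b).symm
  have ne_c_a : c ≠ a := (ne_a_c).symm
  have ne_a1_a : a1 ≠ a := (ne_a_a1).symm
  have ne_a2_a : a2 ≠ a := (ne_a_a2).symm
  have ne_rb1_a : rb1 ≠ a := (ne_a_rb1).symm
  have ne_rb2_a : rb2 ≠ a := (ne_a_rb2).symm
  have ne_rc1_a : rc1 ≠ a := (ne_a_rc1).symm
  have ne_rc2_a : rc2 ≠ a := (ne_a_rc2).symm
  have ne_c_b : c ≠ b := (ne_b_c).symm
  have ne_a1_b : a1 ≠ b := (ne_b_a1).symm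
  have ne_a2_b : a2 ≠ b := (ne_b_a2).symm
  have ne_rb1_b : rb1 ≠ b := (ne_b_rb1).symm
  have ne_rb2_b : rb2 ≠ b := (ne_b_rb2).symm
  have ne_rc1_b : rc1 ≠ b := (ne_b_rc1).symm
  have ne_rc2_b : rc2 ≠ b := (ne_b_rc2).symm
  have ne_a1_c : a1 ≠ c := (ne_c_a1).symm
  have ne_a2_c : a2 ≠ c := (ne_c_a2).symm
  have ne_rb1_c : rb1 ≠ c := (ne_c_rb1).symm
  have ne_rb2_c : rb2 ≠ c := (ne_c_rb2).symm
  have ne_rc1_c : rc1 ≠ c := (ne_c_rc1).symm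
  have ne_rc2_c : rc2 ≠ c := (ne_c_rc2).symm
  have ne_a2_a1 : a2 ≠ a1 := (ne_a1_a2).symm
  have ne_rb1_a1 : rb1 ≠ a1 := (ne_a1_rb1).symm
  have ne_rb2_a1 : rb2 ≠ a1 := (ne_a1_rb2).symm
  have ne_rc1_a1 : rc1 ≠ a1 := (ne_a1_rc1).symm
  have ne_rc2_a1 : rc2 ≠ a1 := (ne_a1_rc2).symm
  have ne_rb1_a2 : rb1 ≠ a2 := (ne_a2_rb1).symm
  have ne_rb2_a2 : rb2 ≠ a2 := (ne_a2_rb2).symm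
  have ne_rc1_a2 : rc1 ≠ a2 := (ne_a2_rc1).symm
  have ne_rc2_a2 : rc2 ≠ a2 := (ne_a2_rc2).symm
  have ne_rb2_rb1 : rb2 ≠ rb1 := (ne_rb1_rb2).symm
  have ne_rc1_rb1 : rc1 ≠ rb1 := (ne_rb1_rc1).symm
  have ne_rc2_rb1 : rc2 ≠ rb1 := (ne_rb1_rc2).symm
  have ne_rc1_rb2 : rc1 ≠ rb2 := (ne_rb2_rc1).symm
  have ne_rc2_rb2 : rc2 ≠ rb2 := (ne_rb2_rc2).symm
  have ne_rc2_rc1 : rc2 ≠ rc1 := (ne_rc1_rc2).symm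
  have hUr : ({v,a,b,c,a1,a2,rb1,rb2,rc1,rc2} : Finset V) = Finset.univ := by
    apply Finset.eq_univ_of_card
    rw [hcard]
    rw [Finset.card_insert_of_notMem (by simp only [Finset.mem_insert, Finset.mem_singleton, not_or]; exact ⟨ne_v_a, ne_v_b, ne_v_c, ne_v_a1, ne_v_a2, ne_v_rb1, ne_v_rb2, ne_v_rc1, ne_v_rc2⟩), Finset.card_insert_of_notMem (by simp only [Finset.mem_insert, Finset.mem_singleton, not_or]; exact ⟨ne_a_b, ne_a_c, ne_a_a1, ne_a_a2, ne_a_rb1, ne_a_rb2, ne_a_rc1, ne_a_rc2⟩), Finset.card_insert_of_notMem (by simp only [Finset.mem_insert, Finset.mem_singleton, not_or]; exact ⟨ne_b_c, ne_b_a1, ne_b_a2, ne_b_rb1, ne_b_rb2, ne_b_rc1, ne_b_rc2⟩), Finset.card_insert_of_notMem (by simp only [Finset.mem_insert, Finset.mem_singleton, not_or]; exact ⟨ne_c_a1, ne_c_a2, ne_c_rb1, ne_c_rb2, ne_c_rc1, ne_c_rc2⟩), Finset.card_insert_of_notMem (by simp only [Finset.mem_insert, Finset.mem_singleton, not_or];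 exact ⟨ne_a1_a2, ne_a1_rb1, ne_a1_rb2, ne_a1_rc1, ne_a1_rc2⟩), Finset.card_insert_of_notMem (by simp only [Finset.mem_insert, Finset.mem_singleton, not_or]; exact ⟨ne_a2_rb1, ne_a2_rb2, ne_a2_rc1, ne_a2_rc2⟩), Finset.card_insert_of_notMem (by simp only [Finset.mem_insert, Finset.mem_singleton, not_or]; exact ⟨ne_rb1_rb2, ne_rb1_rc1, ne_rb1_rc2⟩), Finset.card_insert_of_notMem (by simp only [Finset.mem_insert, Finset.mem_singleton, not_or]; exact ⟨ne_rb2_rc1, ne_rb2_rc2⟩), Finset.card_insert_of_notMem (by simp only [Finset.mem_singleton]; exact ne_rc1_rc2), Finset.card_singleton]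
  have nl_a1_v : ¬G.Adj a1 v := by
    intro h
    have hm := (G.mem_neighborFinset v a1).mpr h.symm
    rw [hNv] at hm
    simp only [Finset.mem_insert, Finset.mem_singleton] at hm
    rcases hm with h'|h'|h'
    exacts [ne_a1_a h', ne_a1_b h', ne_a1_c h']
  have nl_a1_b : ¬G.Adj a1 b := by
    intro h
    have hm := (G.mem_neighborFinset b a1).mpr h.symm
    rw [hNbr] at hm
    simp only [Finset.mem_insert, Finset.mem_singleton] at hm
    rcases hm with h'|h'|h'
    exacts [ne_a1_v h', ne_a1_rb1 h', ne_a1_rb2 h']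
  have nl_a1_c : ¬G.Adj a1 c := by
    intro h
    have hm := (G.mem_neighborFinset c a1).mpr h.symm
    rw [hNcr] at hm
    simp only [Finset.mem_insert, Finset.mem_singleton] at hm
    rcases hm with h'|h'|h'
    exacts [ne_a1_v h', ne_a1_rc1 h', ne_a1_rc2 h']
  have nl_a1_a2 : ¬G.Adj a1 a2 := fun h => no_tri hgirth haa1 h haa2.symm
  have hsub_a1b : G.neighborFinset a1 ⊆ {a,rb1,rb2,rc1,rc2} := by
    intro y hy
    have hadj : G.Adj a1 y := (G.mem_neighborFinset a1 y).mp hy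
    have hu : y ∈ ({v,a,b,c,a1,a2,rb1,rb2,rc1,rc2} : Finset V) := by rw [hUr]; exact Finset.mem_univ y
    simp only [Finset.mem_insert, Finset.mem_singleton] at hu ⊢
    rcases hu with rfl|rfl|rfl|rfl|rfl|rfl|rfl|rfl|rfl|rfl
    exacts [absurd hadj (nl_a1_v), Or.inl rfl, absurd hadj (nl_a1_b), absurd hadj (nl_a1_c), absurd hadj (G.loopless.irrefl _), absurd hadj (nl_a1_a2), Or.inr (Or.inl rfl), Or.inr (Or.inr (Or.inl rfl)), Or.inr (Or.inr (Or.inr (Or.inl rfl))), Or.inr (Or.inr (Or.inr (Or.inr rfl)))]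
  have hsub_a1c : G.neighborFinset a1 ⊆ {a,rc1,rc2,rb1,rb2} := by
    intro y hy
    have hadj : G.Adj a1 y := (G.mem_neighborFinset a1 y).mp hy
    have hu : y ∈ ({v,a,b,c,a1,a2,rb1,rb2,rc1,rc2} : Finset V) := by rw [hUr]; exact Finset.mem_univ y
    simp only [Finset.mem_insert, Finset.mem_singleton] at hu ⊢
    rcases hu with rfl|rfl|rfl|rfl|rfl|rfl|rfl|rfl|rfl|rfl
    exacts [absurd hadj (nl_a1_v), Or.inl rfl, absurd hadj (nl_a1_b), absurd hadj (nl_a1_c), absurd hadj (G.loopless.irrefl _), absurd hadj (nl_a1_a2), Or.inr (Or.inr (Or.inr (Or.inl rfl))), Or.inr (Or.inr (Or.inr (Or.inr rfl))), Or.inr (Or.inl rfl), Or.inr (Or.inr (Or.inl rfl))]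
  have hch_b : G.Adj a1 rb1 ∨ G.Adj a1 rb2 :=
    child_adj hgirth (hdeg a1) hsub_a1b hcrc1 hcrc2 ne_a1_c ne_rc1_rc2
  have hch_c : G.Adj a1 rc1 ∨ G.Adj a1 rc2 :=
    child_adj hgirth (hdeg a1) hsub_a1c hbrb1 hbrb2 ne_a1_b ne_rb1_rb2
  obtain ⟨b1, b2, ha1b1, hpb⟩ := select_pair (P := fun t => G.Adj a1 t) hch_b
  obtain ⟨c1, c2, ha1c1, hpc⟩ := select_pair (P := fun t => G.Adj a1 t) hch_c
  have hmb1 : b1 = rb1 ∨ b1 = rb2 := by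
    have h : b1 ∈ ({rb1, rb2} : Finset V) := by rw [← hpb]; exact Finset.mem_insert_self _ _
    simpa using h
  have hmb2 : b2 = rb1 ∨ b2 = rb2 := by
    have h : b2 ∈ ({rb1, rb2} : Finset V) := by rw [← hpb]; exact Finset.mem_insert_of_mem (Finset.mem_singleton_self _)
    simpa using h
  have hmc1 : c1 = rc1 ∨ c1 = rc2 := by
    have h : c1 ∈ ({rc1, rc2} : Finset V) := by rw [← hpc]; exact Finset.mem_insert_self _ _
    simpa using h
  have hmc2 : c2 = rc1 ∨ c2 = rc2 := by
    have h : c2 ∈ ({rc1, rc2} : Finset V) := by rw [← hpc]; exact Finset.mem_insert_of_mem (Finset.mem_singleton_self _)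
    simpa using h
  have hb12 : b1 ≠ b2 := by
    intro h
    have hcard2 := congrArg Finset.card hpb
    rw [h, Finset.pair_eq_singleton, Finset.card_singleton, Finset.card_pair ne_rb1_rb2] at hcard2
    exact absurd hcard2 (by decide)
  have hc12 : c1 ≠ c2 := by
    intro h
    have hcard2 := congrArg Finset.card hpc
    rw [h, Finset.pair_eq_singleton, Finset.card_singleton, Finset.card_pair ne_rc1_rc2] at hcard2
    exact absurd hcard2 (by decide)
  have hbb1 : G.Adj b b1 := by rcases hmb1 with h|h <;> rw [h] <;> first | exact hbrb1 | exact hbrb2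
  have hbb2 : G.Adj b b2 := by rcases hmb2 with h|h <;> rw [h] <;> first | exact hbrb1 | exact hbrb2
  have hcc1 : G.Adj c c1 := by rcases hmc1 with h|h <;> rw [h] <;> first | exact hcrc1 | exact hcrc2
  have hcc2 : G.Adj c c2 := by rcases hmc2 with h|h <;> rw [h] <;> first | exact hcrc1 | exact hcrc2
  have hNb : G.neighborFinset b = {v, b1, b2} := by rw [hNbr, ← hpb]
  have hNc : G.neighborFinset c = {v, c1, c2} := by rw [hNcr, ← hpc]
  -- final ne facts
  have ne2_v_a : v ≠ a := ne_v_a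
  have ne2_v_b : v ≠ b := ne_v_b
  have ne2_v_c : v ≠ c := ne_v_c
  have ne2_v_a1 : v ≠ a1 := ne_v_a1
  have ne2_v_a2 : v ≠ a2 := ne_v_a2
  have ne2_v_b1 : v ≠ b1 := by rcases hmb1 with h|h <;> rw [h] <;> assumption
  have ne2_v_b2 : v ≠ b2 := by rcases hmb2 with h|h <;> rw [h] <;> assumption
  have ne2_v_c1 : v ≠ c1 := by rcases hmc1 with h|h <;> rw [h] <;> assumption
  have ne2_v_c2 : v ≠ c2 := by rcases hmc2 with h|h <;> rw [h] <;> assumption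
  have ne2_a_b : a ≠ b := ne_a_b
  have ne2_a_c : a ≠ c := ne_a_c
  have ne2_a_a1 : a ≠ a1 := ne_a_a1
  have ne2_a_a2 : a ≠ a2 := ne_a_a2
  have ne2_a_b1 : a ≠ b1 := by rcases hmb1 with h|h <;> rw [h] <;> assumption
  have ne2_a_b2 : a ≠ b2 := by rcases hmb2 with h|h <;> rw [h] <;> assumption
  have ne2_a_c1 : a ≠ c1 := by rcases hmc1 with h|h <;> rw [h] <;> assumption
  have ne2_a_c2 : a ≠ c2 := by rcases hmc2 with h|h <;> rw [h] <;> assumption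
  have ne2_b_c : b ≠ c := ne_b_c
  have ne2_b_a1 : b ≠ a1 := ne_b_a1
  have ne2_b_a2 : b ≠ a2 := ne_b_a2
  have ne2_b_b1 : b ≠ b1 := by rcases hmb1 with h|h <;> rw [h] <;> assumption
  have ne2_b_b2 : b ≠ b2 := by rcases hmb2 with h|h <;> rw [h] <;> assumption
  have ne2_b_c1 : b ≠ c1 := by rcases hmc1 with h|h <;> rw [h] <;> assumption
  have ne2_b_c2 : b ≠ c2 := by rcases hmc2 with h|h <;> rw [h] <;> assumption
  have ne2_c_a1 : c ≠ a1 := ne_c_a1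
  have ne2_c_a2 : c ≠ a2 := ne_c_a2
  have ne2_c_b1 : c ≠ b1 := by rcases hmb1 with h|h <;> rw [h] <;> assumption
  have ne2_c_b2 : c ≠ b2 := by rcases hmb2 with h|h <;> rw [h] <;> assumption
  have ne2_c_c1 : c ≠ c1 := by rcases hmc1 with h|h <;> rw [h] <;> assumption
  have ne2_c_c2 : c ≠ c2 := by rcases hmc2 with h|h <;> rw [h] <;> assumption
  have ne2_a1_a2 : a1 ≠ a2 := ne_a1_a2
  have ne2_a1_b1 : a1 ≠ b1 := by rcases hmb1 with h|h <;> rw [h] <;> assumption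
  have ne2_a1_b2 : a1 ≠ b2 := by rcases hmb2 with h|h <;> rw [h] <;> assumption
  have ne2_a1_c1 : a1 ≠ c1 := by rcases hmc1 with h|h <;> rw [h] <;> assumption
  have ne2_a1_c2 : a1 ≠ c2 := by rcases hmc2 with h|h <;> rw [h] <;> assumption
  have ne2_a2_b1 : a2 ≠ b1 := by rcases hmb1 with h|h <;> rw [h] <;> assumption
  have ne2_a2_b2 : a2 ≠ b2 := by rcases hmb2 with h|h <;> rw [h] <;> assumption
  have ne2_a2_c1 : a2 ≠ c1 := by rcases hmc1 with h|h <;> rw [h] <;> assumption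
  have ne2_a2_c2 : a2 ≠ c2 := by rcases hmc2 with h|h <;> rw [h] <;> assumption
  have ne2_b1_b2 : b1 ≠ b2 := hb12
  have ne2_b1_c1 : b1 ≠ c1 := by rcases hmb1 with h|h <;> rcases hmc1 with h'|h' <;> rw [h, h'] <;> assumption
  have ne2_b1_c2 : b1 ≠ c2 := by rcases hmb1 with h|h <;> rcases hmc2 with h'|h' <;> rw [h, h'] <;> assumption
  have ne2_b2_c1 : b2 ≠ c1 := by rcases hmb2 with h|h <;> rcases hmc1 with h'|h' <;> rw [h, h'] <;> assumption
  have ne2_b2_c2 : b2 ≠ c2 := by rcases hmb2 with h|h <;> rcases hmc2 with h'|h' <;> rw [h, h'] <;> assumption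
  have ne2_c1_c2 : c1 ≠ c2 := hc12
  have ne2_a_v : a ≠ v := (ne2_v_a).symm
  have ne2_b_v : b ≠ v := (ne2_v_b).symm
  have ne2_c_v : c ≠ v := (ne2_v_c).symm
  have ne2_a1_v : a1 ≠ v := (ne2_v_a1).symm
  have ne2_a2_v : a2 ≠ v := (ne2_v_a2).symm
  have ne2_b1_v : b1 ≠ v := (ne2_v_b1).symm
  have ne2_b2_v : b2 ≠ v := (ne2_v_b2).symm
  have ne2_c1_v : c1 ≠ v := (ne2_v_c1).symm
  have ne2_c2_v : c2 ≠ v := (ne2_v_c2).symm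
  have ne2_b_a : b ≠ a := (ne2_a_b).symm
  have ne2_c_a : c ≠ a := (ne2_a_c).symm
  have ne2_a1_a : a1 ≠ a := (ne2_a_a1).symm
  have ne2_a2_a : a2 ≠ a := (ne2_a_a2).symm
  have ne2_b1_a : b1 ≠ a := (ne2_a_b1).symm
  have ne2_b2_a : b2 ≠ a := (ne2_a_b2).symm
  have ne2_c1_a : c1 ≠ a := (ne2_a_c1).symm
  have ne2_c2_a : c2 ≠ a := (ne2_a_c2).symm
  have ne2_c_b : c ≠ b := (ne2_b_c).symm
  have ne2_a1_b : a1 ≠ b := (ne2_b_a1).symm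
  have ne2_a2_b : a2 ≠ b := (ne2_b_a2).symm
  have ne2_b1_b : b1 ≠ b := (ne2_b_b1).symm
  have ne2_b2_b : b2 ≠ b := (ne2_b_b2).symm
  have ne2_c1_b : c1 ≠ b := (ne2_b_c1).symm
  have ne2_c2_b : c2 ≠ b := (ne2_b_c2).symm
  have ne2_a1_c : a1 ≠ c := (ne2_c_a1).symm
  have ne2_a2_c : a2 ≠ c := (ne2_c_a2).symm
  have ne2_b1_c : b1 ≠ c := (ne2_c_b1).symm
  have ne2_b2_c : b2 ≠ c := (ne2_c_b2).symm
  have ne2_c1_c : c1 ≠ c := (ne2_c_c1).symm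
  have ne2_c2_c : c2 ≠ c := (ne2_c_c2).symm
  have ne2_a2_a1 : a2 ≠ a1 := (ne2_a1_a2).symm
  have ne2_b1_a1 : b1 ≠ a1 := (ne2_a1_b1).symm
  have ne2_b2_a1 : b2 ≠ a1 := (ne2_a1_b2).symm
  have ne2_c1_a1 : c1 ≠ a1 := (ne2_a1_c1).symm
  have ne2_c2_a1 : c2 ≠ a1 := (ne2_a1_c2).symm
  have ne2_b1_a2 : b1 ≠ a2 := (ne2_a2_b1).symm
  have ne2_b2_a2 : b2 ≠ a2 := (ne2_a2_b2).symm
  have ne2_c1_a2 : c1 ≠ a2 := (ne2_a2_c1).symm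
  have ne2_c2_a2 : c2 ≠ a2 := (ne2_a2_c2).symm
  have ne2_b2_b1 : b2 ≠ b1 := (ne2_b1_b2).symm
  have ne2_c1_b1 : c1 ≠ b1 := (ne2_b1_c1).symm
  have ne2_c2_b1 : c2 ≠ b1 := (ne2_b1_c2).symm
  have ne2_c1_b2 : c1 ≠ b2 := (ne2_b2_c1).symm
  have ne2_c2_b2 : c2 ≠ b2 := (ne2_b2_c2).symm
  have ne2_c2_c1 : c2 ≠ c1 := (ne2_c1_c2).symm
  have hU2 : ({v,a,b,c,a1,a2,b1,b2,c1,c2} : Finset V) = Finset.univ := by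
    apply Finset.eq_univ_of_card
    rw [hcard]
    rw [Finset.card_insert_of_notMem (by simp only [Finset.mem_insert, Finset.mem_singleton, not_or]; exact ⟨ne2_v_a, ne2_v_b, ne2_v_c, ne2_v_a1, ne2_v_a2, ne2_v_b1, ne2_v_b2, ne2_v_c1, ne2_v_c2⟩), Finset.card_insert_of_notMem (by simp only [Finset.mem_insert, Finset.mem_singleton, not_or]; exact ⟨ne2_a_b, ne2_a_c, ne2_a_a1, ne2_a_a2, ne2_a_b1, ne2_a_b2, ne2_a_c1, ne2_a_c2⟩), Finset.card_insert_of_notMem (by simp only [Finset.mem_insert, Finset.mem_singleton, not_or]; exact ⟨ne2_b_c, ne2_b_a1, ne2_b_a2, ne2_b_b1, ne2_b_b2, ne2_b_c1, ne2_b_c2⟩), Finset.card_insert_of_notMem (by simp only [Finset.mem_insert, Finset.mem_singleton, not_or]; exact ⟨ne2_c_a1, ne2_c_a2, ne2_c_b1, ne2_c_b2, ne2_c_c1, ne2_c_c2⟩), Finset.card_insert_of_notMem (by simp only [Finset.mem_insert, Finset.mem_singleton, not_or]; exact ⟨ne2_a1_a2, ne2_a1_b1, ne2_a1_b2, ne2_a1_c1,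 ne2_a1_c2⟩), Finset.card_insert_of_notMem (by simp only [Finset.mem_insert, Finset.mem_singleton, not_or]; exact ⟨ne2_a2_b1, ne2_a2_b2, ne2_a2_c1, ne2_a2_c2⟩), Finset.card_insert_of_notMem (by simp only [Finset.mem_insert, Finset.mem_singleton, not_or]; exact ⟨ne2_b1_b2, ne2_b1_c1, ne2_b1_c2⟩), Finset.card_insert_of_notMem (by simp only [Finset.mem_insert, Finset.mem_singleton, not_or]; exact ⟨ne2_b2_c1, ne2_b2_c2⟩), Finset.card_insert_of_notMem (by simp only [Finset.mem_singleton]; exact ne2_c1_c2), Finset.card_singleton]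
  have nl_a2_v : ¬G.Adj a2 v := by
    intro h
    have hm := (G.mem_neighborFinset v a2).mpr h.symm
    rw [hNv] at hm
    simp only [Finset.mem_insert, Finset.mem_singleton] at hm
    rcases hm with h'|h'|h'
    exacts [ne2_a2_a h', ne2_a2_b h', ne2_a2_c h']
  have nl_a2_b : ¬G.Adj a2 b := by
    intro h
    have hm := (G.mem_neighborFinset b a2).mpr h.symm
    rw [hNb] at hm
    simp only [Finset.mem_insert, Finset.mem_singleton] at hm
    rcases hm with h'|h'|h'
    exacts [ne2_a2_v h', ne2_a2_b1 h', ne2_a2_b2 h']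
  have nl_a2_c : ¬G.Adj a2 c := by
    intro h
    have hm := (G.mem_neighborFinset c a2).mpr h.symm
    rw [hNc] at hm
    simp only [Finset.mem_insert, Finset.mem_singleton] at hm
    rcases hm with h'|h'|h'
    exacts [ne2_a2_v h', ne2_a2_c1 h', ne2_a2_c2 h']
  have nl_a2_a1 : ¬G.Adj a2 a1 := fun h => no_tri hgirth haa2 h haa1.symm
  have hsub_a2b : G.neighborFinset a2 ⊆ {a,b1,b2,c1,c2} := by
    intro y hy
    have hadj : G.Adj a2 y := (G.mem_neighborFinset a2 y).mp hy
    have hu : y ∈ ({v,a,b,c,a1,a2,b1,b2,c1,c2} : Finset V) := by rw [hU2]; exact Finset.mem_univ y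
    simp only [Finset.mem_insert, Finset.mem_singleton] at hu ⊢
    rcases hu with rfl|rfl|rfl|rfl|rfl|rfl|rfl|rfl|rfl|rfl
    exacts [absurd hadj (nl_a2_v), Or.inl rfl, absurd hadj (nl_a2_b), absurd hadj (nl_a2_c), absurd hadj (nl_a2_a1), absurd hadj (G.loopless.irrefl _), Or.inr (Or.inl rfl), Or.inr (Or.inr (Or.inl rfl)), Or.inr (Or.inr (Or.inr (Or.inl rfl))), Or.inr (Or.inr (Or.inr (Or.inr rfl)))]
  have hsub_a2c : G.neighborFinset a2 ⊆ {a,c1,c2,b1,b2} := by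
    intro y hy
    have hadj : G.Adj a2 y := (G.mem_neighborFinset a2 y).mp hy
    have hu : y ∈ ({v,a,b,c,a1,a2,b1,b2,c1,c2} : Finset V) := by rw [hU2]; exact Finset.mem_univ y
    simp only [Finset.mem_insert, Finset.mem_singleton] at hu ⊢
    rcases hu with rfl|rfl|rfl|rfl|rfl|rfl|rfl|rfl|rfl|rfl
    exacts [absurd hadj (nl_a2_v), Or.inl rfl, absurd hadj (nl_a2_b), absurd hadj (nl_a2_c), absurd hadj (nl_a2_a1), absurd hadj (G.loopless.irrefl _), Or.inr (Or.inr (Or.inr (Or.inl rfl))), Or.inr (Or.inr (Or.inr (Or.inr rfl))), Or.inr (Or.inl rfl), Or.inr (Or.inr (Or.inl rfl))]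
  have hch_a2b : G.Adj a2 b1 ∨ G.Adj a2 b2 :=
    child_adj hgirth (hdeg a2) hsub_a2b hcc1 hcc2 ne2_a2_c hc12
  have nl_a2_b1 : ¬G.Adj a2 b1 := fun h => no_c4 hgirth haa2 h ha1b1.symm haa1.symm ne2_a_b1 ne2_a2_a1
  have ha2b2 : G.Adj a2 b2 := hch_a2b.resolve_left nl_a2_b1
  have hch_a2c : G.Adj a2 c1 ∨ G.Adj a2 c2 :=
    child_adj hgirth (hdeg a2) hsub_a2c hbb1 hbb2 ne2_a2_b hb12
  have nl_a2_c1 : ¬G.Adj a2 c1 := fun h => no_c4 hgirth haa2 h ha1c1.symm haa1.symm ne2_a_c1 ne2_a2_a1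
  have ha2c2 : G.Adj a2 c2 := hch_a2c.resolve_left nl_a2_c1
  have nl_b1_v : ¬G.Adj b1 v := by
    intro h
    have hm := (G.mem_neighborFinset v b1).mpr h.symm
    rw [hNv] at hm
    simp only [Finset.mem_insert, Finset.mem_singleton] at hm
    rcases hm with h'|h'|h'
    exacts [ne2_b1_a h', ne2_b1_b h', ne2_b1_c h']
  have nl_b1_a : ¬G.Adj b1 a := by
    intro h
    have hm := (G.mem_neighborFinset a b1).mpr h.symm
    rw [hNa] at hm
    simp only [Finset.mem_insert, Finset.mem_singleton] at hm
    rcases hm with h'|h'|h'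
    exacts [ne2_b1_v h', ne2_b1_a1 h', ne2_b1_a2 h']
  have nl_b1_c : ¬G.Adj b1 c := by
    intro h
    have hm := (G.mem_neighborFinset c b1).mpr h.symm
    rw [hNc] at hm
    simp only [Finset.mem_insert, Finset.mem_singleton] at hm
    rcases hm with h'|h'|h'
    exacts [ne2_b1_v h', ne2_b1_c1 h', ne2_b1_c2 h']
  have nl_b1_b2 : ¬G.Adj b1 b2 := fun h => no_tri hgirth hbb1 h hbb2.symm
  have hsub_b1c : G.neighborFinset b1 ⊆ {b,c1,c2,a1,a2} := by
    intro y hy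
    have hadj : G.Adj b1 y := (G.mem_neighborFinset b1 y).mp hy
    have hu : y ∈ ({v,a,b,c,a1,a2,b1,b2,c1,c2} : Finset V) := by rw [hU2]; exact Finset.mem_univ y
    simp only [Finset.mem_insert, Finset.mem_singleton] at hu ⊢
    rcases hu with rfl|rfl|rfl|rfl|rfl|rfl|rfl|rfl|rfl|rfl
    exacts [absurd hadj (nl_b1_v), absurd hadj (nl_b1_a), Or.inl rfl, absurd hadj (nl_b1_c), Or.inr (Or.inr (Or.inr (Or.inl rfl))), Or.inr (Or.inr (Or.inr (Or.inr rfl))), absurd hadj (G.loopless.irrefl _), absurd hadj (nl_b1_b2), Or.inr (Or.inl rfl), Or.inr (Or.inr (Or.inl rfl))]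
  have hch_b1c : G.Adj b1 c1 ∨ G.Adj b1 c2 :=
    child_adj hgirth (hdeg b1) hsub_b1c haa1 haa2 ne2_b1_a ne2_a1_a2
  have nl_b1_c1 : ¬G.Adj b1 c1 := fun h => no_tri hgirth ha1b1 h ha1c1.symm
  have hb1c2 : G.Adj b1 c2 := hch_b1c.resolve_left nl_b1_c1
  have nl_b2_v : ¬G.Adj b2 v := by
    intro h
    have hm := (G.mem_neighborFinset v b2).mpr h.symm
    rw [hNv] at hm
    simp only [Finset.mem_insert, Finset.mem_singleton] at hm
    rcases hm with h'|h'|h'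
    exacts [ne2_b2_a h', ne2_b2_b h', ne2_b2_c h']
  have nl_b2_a : ¬G.Adj b2 a := by
    intro h
    have hm := (G.mem_neighborFinset a b2).mpr h.symm
    rw [hNa] at hm
    simp only [Finset.mem_insert, Finset.mem_singleton] at hm
    rcases hm with h'|h'|h'
    exacts [ne2_b2_v h', ne2_b2_a1 h', ne2_b2_a2 h']
  have nl_b2_c : ¬G.Adj b2 c := by
    intro h
    have hm := (G.mem_neighborFinset c b2).mpr h.symm
    rw [hNc] at hm
    simp only [Finset.mem_insert, Finset.mem_singleton] at hm
    rcases hm with h'|h'|h'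
    exacts [ne2_b2_v h', ne2_b2_c1 h', ne2_b2_c2 h']
  have nl_b2_b1 : ¬G.Adj b2 b1 := fun h => nl_b1_b2 h.symm
  have hsub_b2c : G.neighborFinset b2 ⊆ {b,c1,c2,a1,a2} := by
    intro y hy
    have hadj : G.Adj b2 y := (G.mem_neighborFinset b2 y).mp hy
    have hu : y ∈ ({v,a,b,c,a1,a2,b1,b2,c1,c2} : Finset V) := by rw [hU2]; exact Finset.mem_univ y
    simp only [Finset.mem_insert, Finset.mem_singleton] at hu ⊢
    rcases hu with rfl|rfl|rfl|rfl|rfl|rfl|rfl|rfl|rfl|rfl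
    exacts [absurd hadj (nl_b2_v), absurd hadj (nl_b2_a), Or.inl rfl, absurd hadj (nl_b2_c), Or.inr (Or.inr (Or.inr (Or.inl rfl))), Or.inr (Or.inr (Or.inr (Or.inr rfl))), absurd hadj (nl_b2_b1), absurd hadj (G.loopless.irrefl _), Or.inr (Or.inl rfl), Or.inr (Or.inr (Or.inl rfl))]
  have hch_b2c : G.Adj b2 c1 ∨ G.Adj b2 c2 :=
    child_adj hgirth (hdeg b2) hsub_b2c haa1 haa2 ne2_b2_a ne2_a1_a2
  have nl_b2_c2 : ¬G.Adj b2 c2 := fun h => no_tri hgirth ha2b2 h ha2c2.symm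
  have hb2c1 : G.Adj b2 c1 := hch_b2c.resolve_right nl_b2_c2
  have hNa1 : G.neighborFinset a1 = {a, b1, c1} := by
    refine (Finset.eq_of_subset_of_card_le ?_ ?_).symm
    · intro y hy
      simp only [Finset.mem_insert, Finset.mem_singleton] at hy
      rcases hy with rfl|rfl|rfl
      exacts [(G.mem_neighborFinset _ _).mpr (haa1.symm), (G.mem_neighborFinset _ _).mpr (ha1b1), (G.mem_neighborFinset _ _).mpr (ha1c1)]
    · rw [hdeg a1]
      rw [Finset.card_insert_of_notMem (by simp only [Finset.mem_insert, Finset.mem_singleton, not_or]; exact ⟨ne2_a_b1, ne2_a_c1⟩),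
        Finset.card_insert_of_notMem (by simp only [Finset.mem_singleton]; exact ne2_b1_c1), Finset.card_singleton]
  have hNa2 : G.neighborFinset a2 = {a, b2, c2} := by
    refine (Finset.eq_of_subset_of_card_le ?_ ?_).symm
    · intro y hy
      simp only [Finset.mem_insert, Finset.mem_singleton] at hy
      rcases hy with rfl|rfl|rfl
      exacts [(G.mem_neighborFinset _ _).mpr (haa2.symm), (G.mem_neighborFinset _ _).mpr (ha2b2), (G.mem_neighborFinset _ _).mpr (ha2c2)]
    · rw [hdeg a2]
      rw [Finset.card_insert_of_notMem (by simp only [Finset.mem_insert, Finset.mem_singleton, not_or]; exact ⟨ne2_a_b2, ne2_a_c2⟩),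
        Finset.card_insert_of_notMem (by simp only [Finset.mem_singleton]; exact ne2_b2_c2), Finset.card_singleton]
  have hNb1 : G.neighborFinset b1 = {b, a1, c2} := by
    refine (Finset.eq_of_subset_of_card_le ?_ ?_).symm
    · intro y hy
      simp only [Finset.mem_insert, Finset.mem_singleton] at hy
      rcases hy with rfl|rfl|rfl
      exacts [(G.mem_neighborFinset _ _).mpr (hbb1.symm), (G.mem_neighborFinset _ _).mpr (ha1b1.symm), (G.mem_neighborFinset _ _).mpr (hb1c2)]
    · rw [hdeg b1]
      rw [Finset.card_insert_of_notMem (by simp only [Finset.mem_insert, Finset.mem_singleton, not_or]; exact ⟨ne2_b_a1, ne2_b_c2⟩),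
        Finset.card_insert_of_notMem (by simp only [Finset.mem_singleton]; exact ne2_a1_c2), Finset.card_singleton]
  have hNb2 : G.neighborFinset b2 = {b, a2, c1} := by
    refine (Finset.eq_of_subset_of_card_le ?_ ?_).symm
    · intro y hy
      simp only [Finset.mem_insert, Finset.mem_singleton] at hy
      rcases hy with rfl|rfl|rfl
      exacts [(G.mem_neighborFinset _ _).mpr (hbb2.symm), (G.mem_neighborFinset _ _).mpr (ha2b2.symm), (G.mem_neighborFinset _ _).mpr (hb2c1)]
    · rw [hdeg b2]
      rw [Finset.card_insert_of_notMem (by simp only [Finset.mem_insert, Finset.mem_singleton, not_or]; exact ⟨ne2_b_a2, ne2_b_c1⟩),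
        Finset.card_insert_of_notMem (by simp only [Finset.mem_singleton]; exact ne2_a2_c1), Finset.card_singleton]
  have hNc1 : G.neighborFinset c1 = {c, a1, b2} := by
    refine (Finset.eq_of_subset_of_card_le ?_ ?_).symm
    · intro y hy
      simp only [Finset.mem_insert, Finset.mem_singleton] at hy
      rcases hy with rfl|rfl|rfl
      exacts [(G.mem_neighborFinset _ _).mpr (hcc1.symm), (G.mem_neighborFinset _ _).mpr (ha1c1.symm), (G.mem_neighborFinset _ _).mpr (hb2c1.symm)]
    · rw [hdeg c1]
      rw [Finset.card_insert_of_notMem (by simp only [Finset.mem_insert, Finset.mem_singleton, not_or]; exact ⟨ne2_c_a1, ne2_c_b2⟩),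
        Finset.card_insert_of_notMem (by simp only [Finset.mem_singleton]; exact ne2_a1_b2), Finset.card_singleton]
  have hNc2 : G.neighborFinset c2 = {c, a2, b1} := by
    refine (Finset.eq_of_subset_of_card_le ?_ ?_).symm
    · intro y hy
      simp only [Finset.mem_insert, Finset.mem_singleton] at hy
      rcases hy with rfl|rfl|rfl
      exacts [(G.mem_neighborFinset _ _).mpr (hcc2.symm), (G.mem_neighborFinset _ _).mpr (ha2c2.symm), (G.mem_neighborFinset _ _).mpr (hb1c2.symm)]
    · rw [hdeg c2]
      rw [Finset.card_insert_of_notMem (by simp only [Finset.mem_insert, Finset.mem_singleton, not_or]; exact ⟨ne2_c_a2, ne2_c_b1⟩),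
        Finset.card_insert_of_notMem (by simp only [Finset.mem_singleton]; exact ne2_a2_b1), Finset.card_singleton]
  -- non-adjacency facts
  have nadj_f_v_a1 : ¬G.Adj v a1 := by
    rw [← G.mem_neighborFinset, hNv]
    simp only [Finset.mem_insert, Finset.mem_singleton, not_or]
    exact ⟨ne2_a1_a, ne2_a1_b, ne2_a1_c⟩
  have nadj_f_v_a2 : ¬G.Adj v a2 := by
    rw [← G.mem_neighborFinset, hNv]
    simp only [Finset.mem_insert, Finset.mem_singleton, not_or]
    exact ⟨ne2_a2_a, ne2_a2_b, ne2_a2_c⟩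
  have nadj_f_v_b1 : ¬G.Adj v b1 := by
    rw [← G.mem_neighborFinset, hNv]
    simp only [Finset.mem_insert, Finset.mem_singleton, not_or]
    exact ⟨ne2_b1_a, ne2_b1_b, ne2_b1_c⟩
  have nadj_f_v_b2 : ¬G.Adj v b2 := by
    rw [← G.mem_neighborFinset, hNv]
    simp only [Finset.mem_insert, Finset.mem_singleton, not_or]
    exact ⟨ne2_b2_a, ne2_b2_b, ne2_b2_c⟩
  have nadj_f_v_c1 : ¬G.Adj v c1 := by
    rw [← G.mem_neighborFinset, hNv]
    simp only [Finset.mem_insert, Finset.mem_singleton, not_or]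
    exact ⟨ne2_c1_a, ne2_c1_b, ne2_c1_c⟩
  have nadj_f_v_c2 : ¬G.Adj v c2 := by
    rw [← G.mem_neighborFinset, hNv]
    simp only [Finset.mem_insert, Finset.mem_singleton, not_or]
    exact ⟨ne2_c2_a, ne2_c2_b, ne2_c2_c⟩
  have nadj_f_a_b : ¬G.Adj a b := by
    rw [← G.mem_neighborFinset, hNa]
    simp only [Finset.mem_insert, Finset.mem_singleton, not_or]
    exact ⟨ne2_b_v, ne2_b_a1, ne2_b_a2⟩
  have nadj_f_a_c : ¬G.Adj a c := by
    rw [← G.mem_neighborFinset, hNa]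
    simp only [Finset.mem_insert, Finset.mem_singleton, not_or]
    exact ⟨ne2_c_v, ne2_c_a1, ne2_c_a2⟩
  have nadj_f_a_b1 : ¬G.Adj a b1 := by
    rw [← G.mem_neighborFinset, hNa]
    simp only [Finset.mem_insert, Finset.mem_singleton, not_or]
    exact ⟨ne2_b1_v, ne2_b1_a1, ne2_b1_a2⟩
  have nadj_f_a_b2 : ¬G.Adj a b2 := by
    rw [← G.mem_neighborFinset, hNa]
    simp only [Finset.mem_insert, Finset.mem_singleton, not_or]
    exact ⟨ne2_b2_v, ne2_b2_a1, ne2_b2_a2⟩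
  have nadj_f_a_c1 : ¬G.Adj a c1 := by
    rw [← G.mem_neighborFinset, hNa]
    simp only [Finset.mem_insert, Finset.mem_singleton, not_or]
    exact ⟨ne2_c1_v, ne2_c1_a1, ne2_c1_a2⟩
  have nadj_f_a_c2 : ¬G.Adj a c2 := by
    rw [← G.mem_neighborFinset, hNa]
    simp only [Finset.mem_insert, Finset.mem_singleton, not_or]
    exact ⟨ne2_c2_v, ne2_c2_a1, ne2_c2_a2⟩
  have nadj_f_b_c : ¬G.Adj b c := by
    rw [← G.mem_neighborFinset, hNb]
    simp only [Finset.mem_insert, Finset.mem_singleton, not_or]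
    exact ⟨ne2_c_v, ne2_c_b1, ne2_c_b2⟩
  have nadj_f_b_a1 : ¬G.Adj b a1 := by
    rw [← G.mem_neighborFinset, hNb]
    simp only [Finset.mem_insert, Finset.mem_singleton, not_or]
    exact ⟨ne2_a1_v, ne2_a1_b1, ne2_a1_b2⟩
  have nadj_f_b_a2 : ¬G.Adj b a2 := by
    rw [← G.mem_neighborFinset, hNb]
    simp only [Finset.mem_insert, Finset.mem_singleton, not_or]
    exact ⟨ne2_a2_v, ne2_a2_b1, ne2_a2_b2⟩
  have nadj_f_b_c1 : ¬G.Adj b c1 := by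
    rw [← G.mem_neighborFinset, hNb]
    simp only [Finset.mem_insert, Finset.mem_singleton, not_or]
    exact ⟨ne2_c1_v, ne2_c1_b1, ne2_c1_b2⟩
  have nadj_f_b_c2 : ¬G.Adj b c2 := by
    rw [← G.mem_neighborFinset, hNb]
    simp only [Finset.mem_insert, Finset.mem_singleton, not_or]
    exact ⟨ne2_c2_v, ne2_c2_b1, ne2_c2_b2⟩
  have nadj_f_c_a1 : ¬G.Adj c a1 := by
    rw [← G.mem_neighborFinset, hNc]
    simp only [Finset.mem_insert, Finset.mem_singleton, not_or]
    exact ⟨ne2_a1_v, ne2_a1_c1, ne2_a1_c2⟩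
  have nadj_f_c_a2 : ¬G.Adj c a2 := by
    rw [← G.mem_neighborFinset, hNc]
    simp only [Finset.mem_insert, Finset.mem_singleton, not_or]
    exact ⟨ne2_a2_v, ne2_a2_c1, ne2_a2_c2⟩
  have nadj_f_c_b1 : ¬G.Adj c b1 := by
    rw [← G.mem_neighborFinset, hNc]
    simp only [Finset.mem_insert, Finset.mem_singleton, not_or]
    exact ⟨ne2_b1_v, ne2_b1_c1, ne2_b1_c2⟩
  have nadj_f_c_b2 : ¬G.Adj c b2 := by
    rw [← G.mem_neighborFinset, hNc]
    simp only [Finset.mem_insert, Finset.mem_singleton, not_or]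
    exact ⟨ne2_b2_v, ne2_b2_c1, ne2_b2_c2⟩
  have nadj_f_a1_a2 : ¬G.Adj a1 a2 := by
    rw [← G.mem_neighborFinset, hNa1]
    simp only [Finset.mem_insert, Finset.mem_singleton, not_or]
    exact ⟨ne2_a2_a, ne2_a2_b1, ne2_a2_c1⟩
  have nadj_f_a1_b2 : ¬G.Adj a1 b2 := by
    rw [← G.mem_neighborFinset, hNa1]
    simp only [Finset.mem_insert, Finset.mem_singleton, not_or]
    exact ⟨ne2_b2_a, ne2_b2_b1, ne2_b2_c1⟩
  have nadj_f_a1_c2 : ¬G.Adj a1 c2 := by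
    rw [← G.mem_neighborFinset, hNa1]
    simp only [Finset.mem_insert, Finset.mem_singleton, not_or]
    exact ⟨ne2_c2_a, ne2_c2_b1, ne2_c2_c1⟩
  have nadj_f_a2_b1 : ¬G.Adj a2 b1 := by
    rw [← G.mem_neighborFinset, hNa2]
    simp only [Finset.mem_insert, Finset.mem_singleton, not_or]
    exact ⟨ne2_b1_a, ne2_b1_b2, ne2_b1_c2⟩
  have nadj_f_a2_c1 : ¬G.Adj a2 c1 := by
    rw [← G.mem_neighborFinset, hNa2]
    simp only [Finset.mem_insert, Finset.mem_singleton, not_or]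
    exact ⟨ne2_c1_a, ne2_c1_b2, ne2_c1_c2⟩
  have nadj_f_b1_b2 : ¬G.Adj b1 b2 := by
    rw [← G.mem_neighborFinset, hNb1]
    simp only [Finset.mem_insert, Finset.mem_singleton, not_or]
    exact ⟨ne2_b2_b, ne2_b2_a1, ne2_b2_c2⟩
  have nadj_f_b1_c1 : ¬G.Adj b1 c1 := by
    rw [← G.mem_neighborFinset, hNb1]
    simp only [Finset.mem_insert, Finset.mem_singleton, not_or]
    exact ⟨ne2_c1_b, ne2_c1_a1, ne2_c1_c2⟩
  have nadj_f_b2_c2 : ¬G.Adj b2 c2 := by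
    rw [← G.mem_neighborFinset, hNb2]
    simp only [Finset.mem_insert, Finset.mem_singleton, not_or]
    exact ⟨ne2_c2_b, ne2_c2_a2, ne2_c2_c1⟩
  have nadj_f_c1_c2 : ¬G.Adj c1 c2 := by
    rw [← G.mem_neighborFinset, hNc1]
    simp only [Finset.mem_insert, Finset.mem_singleton, not_or]
    exact ⟨ne2_c2_c, ne2_c2_a1, ne2_c2_b2⟩
  have hsurj : Function.Surjective (petMap v a b c a1 a2 b1 b2 c1 c2) := by
    intro y
    have hy : y ∈ ({v,a,b,c,a1,a2,b1,b2,c1,c2} : Finset V) := by rw [hU2]; exact Finset.mem_univ y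
    simp only [Finset.mem_insert, Finset.mem_singleton] at hy
    rcases hy with rfl|rfl|rfl|rfl|rfl|rfl|rfl|rfl|rfl|rfl
    exacts [⟨mk2 0 1, petMap_k0 _ _ _ _ _ _ _ _ _ _⟩, ⟨mk2 2 3, petMap_k1 _ _ _ _ _ _ _ _ _ _⟩, ⟨mk2 2 4, petMap_k2 _ _ _ _ _ _ _ _ _ _⟩, ⟨mk2 3 4, petMap_k3 _ _ _ _ _ _ _ _ _ _⟩, ⟨mk2 0 4, petMap_k4 _ _ _ _ _ _ _ _ _ _⟩, ⟨mk2 1 4, petMap_k5 _ _ _ _ _ _ _ _ _ _⟩, ⟨mk2 1 3, petMap_k6 _ _ _ _ _ _ _ _ _ _⟩, ⟨mk2 0 3, petMap_k7 _ _ _ _ _ _ _ _ _ _⟩, ⟨mk2 1 2, petMap_k8 _ _ _ _ _ _ _ _ _ _⟩, ⟨mk2 0 2, petMap_k9 _ _ _ _ _ _ _ _ _ _⟩]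
  have hbij : Function.Bijective (petMap v a b c a1 a2 b1 b2 c1 c2) :=
    (Fintype.bijective_iff_surjective_and_card _).mpr ⟨hsurj, by rw [cardK52, hcard]⟩
  refine ⟨(SimpleGraph.Iso.symm ⟨Equiv.ofBijective _ hbij, ?_⟩ : G ≃g petersenGraph)⟩
  intro x y
  have hE : ∀ k, (Equiv.ofBijective (petMap v a b c a1 a2 b1 b2 c1 c2) hbij) k = petMap v a b c a1 a2 b1 b2 c1 c2 k := fun _ => rfl
  rw [hE x, hE y]
  rcases mem10 x with rfl|rfl|rfl|rfl|rfl|rfl|rfl|rfl|rfl|rfl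
  all_goals rcases mem10 y with rfl|rfl|rfl|rfl|rfl|rfl|rfl|rfl|rfl|rfl
  exacts [(by rw [petMap_k0 v a b c a1 a2 b1 b2 c1 c2]; exact iff_of_false (G.loopless.irrefl v) (by decide)),
    (by rw [petMap_k0 v a b c a1 a2 b1 b2 c1 c2, petMap_k1 v a b c a1 a2 b1 b2 c1 c2]; exact iff_of_true (hva) (by decide)),
    (by rw [petMap_k0 v a b c a1 a2 b1 b2 c1 c2, petMap_k2 v a b c a1 a2 b1 b2 c1 c2]; exact iff_of_true (hvb) (by decide)),
    (by rw [petMap_k0 v a b c a1 a2 b1 b2 c1 c2, petMap_k3 v a b c a1 a2 b1 b2 c1 c2]; exact iff_of_true (hvc) (by decide)),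
    (by rw [petMap_k0 v a b c a1 a2 b1 b2 c1 c2, petMap_k4 v a b c a1 a2 b1 b2 c1 c2]; exact iff_of_false (nadj_f_v_a1) (by decide)),
    (by rw [petMap_k0 v a b c a1 a2 b1 b2 c1 c2, petMap_k5 v a b c a1 a2 b1 b2 c1 c2]; exact iff_of_false (nadj_f_v_a2) (by decide)),
    (by rw [petMap_k0 v a b c a1 a2 b1 b2 c1 c2, petMap_k6 v a b c a1 a2 b1 b2 c1 c2]; exact iff_of_false (nadj_f_v_b1) (by decide)),
    (by rw [petMap_k0 v a b c a1 a2 b1 b2 c1 c2, petMap_k7 v a b c a1 a2 b1 b2 c1 c2]; exact iff_of_false (nadj_f_v_b2) (by decide)),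
    (by rw [petMap_k0 v a b c a1 a2 b1 b2 c1 c2, petMap_k8 v a b c a1 a2 b1 b2 c1 c2]; exact iff_of_false (nadj_f_v_c1) (by decide)),
    (by rw [petMap_k0 v a b c a1 a2 b1 b2 c1 c2, petMap_k9 v a b c a1 a2 b1 b2 c1 c2]; exact iff_of_false (nadj_f_v_c2) (by decide)),
    (by rw [petMap_k1 v a b c a1 a2 b1 b2 c1 c2, petMap_k0 v a b c a1 a2 b1 b2 c1 c2]; exact iff_of_true (hva.symm) (by decide)),
    (by rw [petMap_k1 v a b c a1 a2 b1 b2 c1 c2]; exact iff_of_false (G.loopless.irrefl a) (by decide)),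
    (by rw [petMap_k1 v a b c a1 a2 b1 b2 c1 c2, petMap_k2 v a b c a1 a2 b1 b2 c1 c2]; exact iff_of_false (nadj_f_a_b) (by decide)),
    (by rw [petMap_k1 v a b c a1 a2 b1 b2 c1 c2, petMap_k3 v a b c a1 a2 b1 b2 c1 c2]; exact iff_of_false (nadj_f_a_c) (by decide)),
    (by rw [petMap_k1 v a b c a1 a2 b1 b2 c1 c2, petMap_k4 v a b c a1 a2 b1 b2 c1 c2]; exact iff_of_true (haa1) (by decide)),
    (by rw [petMap_k1 v a b c a1 a2 b1 b2 c1 c2, petMap_k5 v a b c a1 a2 b1 b2 c1 c2]; exact iff_of_true (haa2) (by decide)),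
    (by rw [petMap_k1 v a b c a1 a2 b1 b2 c1 c2, petMap_k6 v a b c a1 a2 b1 b2 c1 c2]; exact iff_of_false (nadj_f_a_b1) (by decide)),
    (by rw [petMap_k1 v a b c a1 a2 b1 b2 c1 c2, petMap_k7 v a b c a1 a2 b1 b2 c1 c2]; exact iff_of_false (nadj_f_a_b2) (by decide)),
    (by rw [petMap_k1 v a b c a1 a2 b1 b2 c1 c2, petMap_k8 v a b c a1 a2 b1 b2 c1 c2]; exact iff_of_false (nadj_f_a_c1) (by decide)),
    (by rw [petMap_k1 v a b c a1 a2 b1 b2 c1 c2, petMap_k9 v a b c a1 a2 b1 b2 c1 c2]; exact iff_of_false (nadj_f_a_c2) (by decide)),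
    (by rw [petMap_k2 v a b c a1 a2 b1 b2 c1 c2, petMap_k0 v a b c a1 a2 b1 b2 c1 c2]; exact iff_of_true (hvb.symm) (by decide)),
    (by rw [petMap_k2 v a b c a1 a2 b1 b2 c1 c2, petMap_k1 v a b c a1 a2 b1 b2 c1 c2]; exact iff_of_false (fun h => nadj_f_a_b h.symm) (by decide)),
    (by rw [petMap_k2 v a b c a1 a2 b1 b2 c1 c2]; exact iff_of_false (G.loopless.irrefl b) (by decide)),
    (by rw [petMap_k2 v a b c a1 a2 b1 b2 c1 c2, petMap_k3 v a b c a1 a2 b1 b2 c1 c2]; exact iff_of_false (nadj_f_b_c) (by decide)),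
    (by rw [petMap_k2 v a b c a1 a2 b1 b2 c1 c2, petMap_k4 v a b c a1 a2 b1 b2 c1 c2]; exact iff_of_false (nadj_f_b_a1) (by decide)),
    (by rw [petMap_k2 v a b c a1 a2 b1 b2 c1 c2, petMap_k5 v a b c a1 a2 b1 b2 c1 c2]; exact iff_of_false (nadj_f_b_a2) (by decide)),
    (by rw [petMap_k2 v a b c a1 a2 b1 b2 c1 c2, petMap_k6 v a b c a1 a2 b1 b2 c1 c2]; exact iff_of_true (hbb1) (by decide)),
    (by rw [petMap_k2 v a b c a1 a2 b1 b2 c1 c2, petMap_k7 v a b c a1 a2 b1 b2 c1 c2]; exact iff_of_true (hbb2) (by decide)),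
    (by rw [petMap_k2 v a b c a1 a2 b1 b2 c1 c2, petMap_k8 v a b c a1 a2 b1 b2 c1 c2]; exact iff_of_false (nadj_f_b_c1) (by decide)),
    (by rw [petMap_k2 v a b c a1 a2 b1 b2 c1 c2, petMap_k9 v a b c a1 a2 b1 b2 c1 c2]; exact iff_of_false (nadj_f_b_c2) (by decide)),
    (by rw [petMap_k3 v a b c a1 a2 b1 b2 c1 c2, petMap_k0 v a b c a1 a2 b1 b2 c1 c2]; exact iff_of_true (hvc.symm) (by decide)),
    (by rw [petMap_k3 v a b c a1 a2 b1 b2 c1 c2, petMap_k1 v a b c a1 a2 b1 b2 c1 c2]; exact iff_of_false (fun h => nadj_f_a_c h.symm) (by decide)),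
    (by rw [petMap_k3 v a b c a1 a2 b1 b2 c1 c2, petMap_k2 v a b c a1 a2 b1 b2 c1 c2]; exact iff_of_false (fun h => nadj_f_b_c h.symm) (by decide)),
    (by rw [petMap_k3 v a b c a1 a2 b1 b2 c1 c2]; exact iff_of_false (G.loopless.irrefl c) (by decide)),
    (by rw [petMap_k3 v a b c a1 a2 b1 b2 c1 c2, petMap_k4 v a b c a1 a2 b1 b2 c1 c2]; exact iff_of_false (nadj_f_c_a1) (by decide)),
    (by rw [petMap_k3 v a b c a1 a2 b1 b2 c1 c2, petMap_k5 v a b c a1 a2 b1 b2 c1 c2]; exact iff_of_false (nadj_f_c_a2) (by decide)),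
    (by rw [petMap_k3 v a b c a1 a2 b1 b2 c1 c2, petMap_k6 v a b c a1 a2 b1 b2 c1 c2]; exact iff_of_false (nadj_f_c_b1) (by decide)),
    (by rw [petMap_k3 v a b c a1 a2 b1 b2 c1 c2, petMap_k7 v a b c a1 a2 b1 b2 c1 c2]; exact iff_of_false (nadj_f_c_b2) (by decide)),
    (by rw [petMap_k3 v a b c a1 a2 b1 b2 c1 c2, petMap_k8 v a b c a1 a2 b1 b2 c1 c2]; exact iff_of_true (hcc1) (by decide)),
    (by rw [petMap_k3 v a b c a1 a2 b1 b2 c1 c2, petMap_k9 v a b c a1 a2 b1 b2 c1 c2]; exact iff_of_true (hcc2) (by decide)),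
    (by rw [petMap_k4 v a b c a1 a2 b1 b2 c1 c2, petMap_k0 v a b c a1 a2 b1 b2 c1 c2]; exact iff_of_false (fun h => nadj_f_v_a1 h.symm) (by decide)),
    (by rw [petMap_k4 v a b c a1 a2 b1 b2 c1 c2, petMap_k1 v a b c a1 a2 b1 b2 c1 c2]; exact iff_of_true (haa1.symm) (by decide)),
    (by rw [petMap_k4 v a b c a1 a2 b1 b2 c1 c2, petMap_k2 v a b c a1 a2 b1 b2 c1 c2]; exact iff_of_false (fun h => nadj_f_b_a1 h.symm) (by decide)),
    (by rw [petMap_k4 v a b c a1 a2 b1 b2 c1 c2, petMap_k3 v a b c a1 a2 b1 b2 c1 c2]; exact iff_of_false (fun h => nadj_f_c_a1 h.symm) (by decide)),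
    (by rw [petMap_k4 v a b c a1 a2 b1 b2 c1 c2]; exact iff_of_false (G.loopless.irrefl a1) (by decide)),
    (by rw [petMap_k4 v a b c a1 a2 b1 b2 c1 c2, petMap_k5 v a b c a1 a2 b1 b2 c1 c2]; exact iff_of_false (nadj_f_a1_a2) (by decide)),
    (by rw [petMap_k4 v a b c a1 a2 b1 b2 c1 c2, petMap_k6 v a b c a1 a2 b1 b2 c1 c2]; exact iff_of_true (ha1b1) (by decide)),
    (by rw [petMap_k4 v a b c a1 a2 b1 b2 c1 c2, petMap_k7 v a b c a1 a2 b1 b2 c1 c2]; exact iff_of_false (nadj_f_a1_b2) (by decide)),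
    (by rw [petMap_k4 v a b c a1 a2 b1 b2 c1 c2, petMap_k8 v a b c a1 a2 b1 b2 c1 c2]; exact iff_of_true (ha1c1) (by decide)),
    (by rw [petMap_k4 v a b c a1 a2 b1 b2 c1 c2, petMap_k9 v a b c a1 a2 b1 b2 c1 c2]; exact iff_of_false (nadj_f_a1_c2) (by decide)),
    (by rw [petMap_k5 v a b c a1 a2 b1 b2 c1 c2, petMap_k0 v a b c a1 a2 b1 b2 c1 c2]; exact iff_of_false (fun h => nadj_f_v_a2 h.symm) (by decide)),
    (by rw [petMap_k5 v a b c a1 a2 b1 b2 c1 c2, petMap_k1 v a b c a1 a2 b1 b2 c1 c2]; exact iff_of_true (haa2.symm) (by decide)),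
    (by rw [petMap_k5 v a b c a1 a2 b1 b2 c1 c2, petMap_k2 v a b c a1 a2 b1 b2 c1 c2]; exact iff_of_false (fun h => nadj_f_b_a2 h.symm) (by decide)),
    (by rw [petMap_k5 v a b c a1 a2 b1 b2 c1 c2, petMap_k3 v a b c a1 a2 b1 b2 c1 c2]; exact iff_of_false (fun h => nadj_f_c_a2 h.symm) (by decide)),
    (by rw [petMap_k5 v a b c a1 a2 b1 b2 c1 c2, petMap_k4 v a b c a1 a2 b1 b2 c1 c2]; exact iff_of_false (fun h => nadj_f_a1_a2 h.symm) (by decide)),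
    (by rw [petMap_k5 v a b c a1 a2 b1 b2 c1 c2]; exact iff_of_false (G.loopless.irrefl a2) (by decide)),
    (by rw [petMap_k5 v a b c a1 a2 b1 b2 c1 c2, petMap_k6 v a b c a1 a2 b1 b2 c1 c2]; exact iff_of_false (nadj_f_a2_b1) (by decide)),
    (by rw [petMap_k5 v a b c a1 a2 b1 b2 c1 c2, petMap_k7 v a b c a1 a2 b1 b2 c1 c2]; exact iff_of_true (ha2b2) (by decide)),
    (by rw [petMap_k5 v a b c a1 a2 b1 b2 c1 c2, petMap_k8 v a b c a1 a2 b1 b2 c1 c2]; exact iff_of_false (nadj_f_a2_c1) (by decide)),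
    (by rw [petMap_k5 v a b c a1 a2 b1 b2 c1 c2, petMap_k9 v a b c a1 a2 b1 b2 c1 c2]; exact iff_of_true (ha2c2) (by decide)),
    (by rw [petMap_k6 v a b c a1 a2 b1 b2 c1 c2, petMap_k0 v a b c a1 a2 b1 b2 c1 c2]; exact iff_of_false (fun h => nadj_f_v_b1 h.symm) (by decide)),
    (by rw [petMap_k6 v a b c a1 a2 b1 b2 c1 c2, petMap_k1 v a b c a1 a2 b1 b2 c1 c2]; exact iff_of_false (fun h => nadj_f_a_b1 h.symm) (by decide)),
    (by rw [petMap_k6 v a b c a1 a2 b1 b2 c1 c2, petMap_k2 v a b c a1 a2 b1 b2 c1 c2]; exact iff_of_true (hbb1.symm) (by decide)),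
    (by rw [petMap_k6 v a b c a1 a2 b1 b2 c1 c2, petMap_k3 v a b c a1 a2 b1 b2 c1 c2]; exact iff_of_false (fun h => nadj_f_c_b1 h.symm) (by decide)),
    (by rw [petMap_k6 v a b c a1 a2 b1 b2 c1 c2, petMap_k4 v a b c a1 a2 b1 b2 c1 c2]; exact iff_of_true (ha1b1.symm) (by decide)),
    (by rw [petMap_k6 v a b c a1 a2 b1 b2 c1 c2, petMap_k5 v a b c a1 a2 b1 b2 c1 c2]; exact iff_of_false (fun h => nadj_f_a2_b1 h.symm) (by decide)),
    (by rw [petMap_k6 v a b c a1 a2 b1 b2 c1 c2]; exact iff_of_false (G.loopless.irrefl b1) (by decide)),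
    (by rw [petMap_k6 v a b c a1 a2 b1 b2 c1 c2, petMap_k7 v a b c a1 a2 b1 b2 c1 c2]; exact iff_of_false (nadj_f_b1_b2) (by decide)),
    (by rw [petMap_k6 v a b c a1 a2 b1 b2 c1 c2, petMap_k8 v a b c a1 a2 b1 b2 c1 c2]; exact iff_of_false (nadj_f_b1_c1) (by decide)),
    (by rw [petMap_k6 v a b c a1 a2 b1 b2 c1 c2, petMap_k9 v a b c a1 a2 b1 b2 c1 c2]; exact iff_of_true (hb1c2) (by decide)),
    (by rw [petMap_k7 v a b c a1 a2 b1 b2 c1 c2, petMap_k0 v a b c a1 a2 b1 b2 c1 c2]; exact iff_of_false (fun h => nadj_f_v_b2 h.symm) (by decide)),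
    (by rw [petMap_k7 v a b c a1 a2 b1 b2 c1 c2, petMap_k1 v a b c a1 a2 b1 b2 c1 c2]; exact iff_of_false (fun h => nadj_f_a_b2 h.symm) (by decide)),
    (by rw [petMap_k7 v a b c a1 a2 b1 b2 c1 c2, petMap_k2 v a b c a1 a2 b1 b2 c1 c2]; exact iff_of_true (hbb2.symm) (by decide)),
    (by rw [petMap_k7 v a b c a1 a2 b1 b2 c1 c2, petMap_k3 v a b c a1 a2 b1 b2 c1 c2]; exact iff_of_false (fun h => nadj_f_c_b2 h.symm) (by decide)),
    (by rw [petMap_k7 v a b c a1 a2 b1 b2 c1 c2, petMap_k4 v a b c a1 a2 b1 b2 c1 c2]; exact iff_of_false (fun h => nadj_f_a1_b2 h.symm) (by decide)),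
    (by rw [petMap_k7 v a b c a1 a2 b1 b2 c1 c2, petMap_k5 v a b c a1 a2 b1 b2 c1 c2]; exact iff_of_true (ha2b2.symm) (by decide)),
    (by rw [petMap_k7 v a b c a1 a2 b1 b2 c1 c2, petMap_k6 v a b c a1 a2 b1 b2 c1 c2]; exact iff_of_false (fun h => nadj_f_b1_b2 h.symm) (by decide)),
    (by rw [petMap_k7 v a b c a1 a2 b1 b2 c1 c2]; exact iff_of_false (G.loopless.irrefl b2) (by decide)),
    (by rw [petMap_k7 v a b c a1 a2 b1 b2 c1 c2, petMap_k8 v a b c a1 a2 b1 b2 c1 c2]; exact iff_of_true (hb2c1) (by decide)),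
    (by rw [petMap_k7 v a b c a1 a2 b1 b2 c1 c2, petMap_k9 v a b c a1 a2 b1 b2 c1 c2]; exact iff_of_false (nadj_f_b2_c2) (by decide)),
    (by rw [petMap_k8 v a b c a1 a2 b1 b2 c1 c2, petMap_k0 v a b c a1 a2 b1 b2 c1 c2]; exact iff_of_false (fun h => nadj_f_v_c1 h.symm) (by decide)),
    (by rw [petMap_k8 v a b c a1 a2 b1 b2 c1 c2, petMap_k1 v a b c a1 a2 b1 b2 c1 c2]; exact iff_of_false (fun h => nadj_f_a_c1 h.symm) (by decide)),
    (by rw [petMap_k8 v a b c a1 a2 b1 b2 c1 c2, petMap_k2 v a b c a1 a2 b1 b2 c1 c2]; exact iff_of_false (fun h => nadj_f_b_c1 h.symm) (by decide)),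
    (by rw [petMap_k8 v a b c a1 a2 b1 b2 c1 c2, petMap_k3 v a b c a1 a2 b1 b2 c1 c2]; exact iff_of_true (hcc1.symm) (by decide)),
    (by rw [petMap_k8 v a b c a1 a2 b1 b2 c1 c2, petMap_k4 v a b c a1 a2 b1 b2 c1 c2]; exact iff_of_true (ha1c1.symm) (by decide)),
    (by rw [petMap_k8 v a b c a1 a2 b1 b2 c1 c2, petMap_k5 v a b c a1 a2 b1 b2 c1 c2]; exact iff_of_false (fun h => nadj_f_a2_c1 h.symm) (by decide)),
    (by rw [petMap_k8 v a b c a1 a2 b1 b2 c1 c2, petMap_k6 v a b c a1 a2 b1 b2 c1 c2]; exact iff_of_false (fun h => nadj_f_b1_c1 h.symm) (by decide)),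
    (by rw [petMap_k8 v a b c a1 a2 b1 b2 c1 c2, petMap_k7 v a b c a1 a2 b1 b2 c1 c2]; exact iff_of_true (hb2c1.symm) (by decide)),
    (by rw [petMap_k8 v a b c a1 a2 b1 b2 c1 c2]; exact iff_of_false (G.loopless.irrefl c1) (by decide)),
    (by rw [petMap_k8 v a b c a1 a2 b1 b2 c1 c2, petMap_k9 v a b c a1 a2 b1 b2 c1 c2]; exact iff_of_false (nadj_f_c1_c2) (by decide)),
    (by rw [petMap_k9 v a b c a1 a2 b1 b2 c1 c2, petMap_k0 v a b c a1 a2 b1 b2 c1 c2]; exact iff_of_false (fun h => nadj_f_v_c2 h.symm) (by decide)),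
    (by rw [petMap_k9 v a b c a1 a2 b1 b2 c1 c2, petMap_k1 v a b c a1 a2 b1 b2 c1 c2]; exact iff_of_false (fun h => nadj_f_a_c2 h.symm) (by decide)),
    (by rw [petMap_k9 v a b c a1 a2 b1 b2 c1 c2, petMap_k2 v a b c a1 a2 b1 b2 c1 c2]; exact iff_of_false (fun h => nadj_f_b_c2 h.symm) (by decide)),
    (by rw [petMap_k9 v a b c a1 a2 b1 b2 c1 c2, petMap_k3 v a b c a1 a2 b1 b2 c1 c2]; exact iff_of_true (hcc2.symm) (by decide)),
    (by rw [petMap_k9 v a b c a1 a2 b1 b2 c1 c2, petMap_k4 v a b c a1 a2 b1 b2 c1 c2]; exact iff_of_false (fun h => nadj_f_a1_c2 h.symm) (by decide)),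
    (by rw [petMap_k9 v a b c a1 a2 b1 b2 c1 c2, petMap_k5 v a b c a1 a2 b1 b2 c1 c2]; exact iff_of_true (ha2c2.symm) (by decide)),
    (by rw [petMap_k9 v a b c a1 a2 b1 b2 c1 c2, petMap_k6 v a b c a1 a2 b1 b2 c1 c2]; exact iff_of_true (hb1c2.symm) (by decide)),
    (by rw [petMap_k9 v a b c a1 a2 b1 b2 c1 c2, petMap_k7 v a b c a1 a2 b1 b2 c1 c2]; exact iff_of_false (fun h => nadj_f_b2_c2 h.symm) (by decide)),
    (by rw [petMap_k9 v a b c a1 a2 b1 b2 c1 c2, petMap_k8 v a b c a1 a2 b1 b2 c1 c2]; exact iff_of_false (fun h => nadj_f_c1_c2 h.symm) (by decide)),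
    (by rw [petMap_k9 v a b c a1 a2 b1 b2 c1 c2]; exact iff_of_false (G.loopless.irrefl c2) (by decide))]
end

section
/- The Petersen graph contains no Hamiltonian cycle. -/
abbrev PV := {s : Finset (Fin 5) // s.card = 2}

/-- DFS predicate: starting a path at `u`, with `visited` already used,
can we take `n` more steps (through unvisited vertices) and end at a vertex
adjacent to `start`? -/
def Srch (start : PV) : ℕ → PV → List PV → Prop
  | 0, u, _ => petersenGraph.Adj u start
  | n + 1, u, visited =>
      ∃ w : PV, petersenGraph.Adj u w ∧ w ∉ visited ∧ Srch start n w (u :: visited)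

instance Srch.dec (start : PV) : ∀ (n : ℕ) (u : PV) (visited : List PV),
    Decidable (Srch start n u visited)
  | 0, u, _ => inferInstanceAs (Decidable (petersenGraph.Adj u start))
  | n + 1, u, visited =>
      @Fintype.decidableExistsFintype _ _
        (fun w => @instDecidableAnd _ _ _
          (@instDecidableAnd _ _ _ (Srch.dec start n w (u :: visited)))) _

lemma srch_sound (start : PV) : ∀ {u v : PV} (q : petersenGraph.Walk u v)
    (visited : List PV), q.support.Nodup → (∀ x ∈ q.support, x ∉ visited) →
    petersenGraph.Adj v start → Srch start q.length u visited := by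
  intro u v q
  induction q with
  | nil =>
    intro visited _ _ hadj
    simpa [Srch] using hadj
  | @cons a b c h q ih =>
    intro visited hnd hvis hadj
    rw [SimpleGraph.Walk.support_cons] at hnd hvis
    have hbu : b ∉ visited := hvis b (by simp [SimpleGraph.Walk.start_mem_support])
    have hnd' : q.support.Nodup := (List.nodup_cons.mp hnd).2
    have hau : a ∉ q.support := (List.nodup_cons.mp hnd).1
    have hrec : Srch start q.length b (a :: visited) := by
      apply ih _ hnd' _ hadj
      intro x hx
      simp only [List.mem_cons, not_or]
      exact ⟨fun hxa => hau (hxa ▸ hx), hvis x (List.mem_cons_of_mem _ hx)⟩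
    show Srch start (q.length + 1) a visited
    exact ⟨b, h, hbu, hrec⟩

set_option maxRecDepth 100000 in
set_option maxHeartbeats 2000000 in
lemma srch_false : ∀ u : PV, ¬ Srch u 9 u [] := by decide

theorem petersen_not_hamiltonian :
    ¬ ∃ (v : {s : Finset (Fin 5) // s.card = 2})
        (p : petersenGraph.Walk v v), p.IsHamiltonianCycle := by
  rintro ⟨v, p, hp⟩
  have hlen : p.length = 10 := by
    rw [hp.length_eq]
    decide
  cases p with
  | nil => exact hp.isCycle.isCircuit.ne_nil rfl
  | cons h q =>
    have hnd : q.support.Nodup := by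
      have := hp.isCycle.support_nodup
      rwa [SimpleGraph.Walk.support_cons, List.tail_cons] at this
    have hql : q.length = 9 := by
      simpa [SimpleGraph.Walk.length_cons] using hlen
    exact srch_false _ (hql ▸ srch_sound _ q [] hnd (by simp) h)
end
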